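/- arXiv:1507.04569 — 5 statements merged into one kernel-verified Lean document; each statement's English description precedes it below -/
import Mathlib

section
/- Let H be a (finite) simple graph and let G = 2H be the signed graph obtained from H by replacing every edge of H by a pair of parallel edges, one positive and one negative. Then the signed chromatic number of G satisfies χ±(G) = 2·χ(H) − 1, where χ(H) is the ordinary chromatic number of H. -/
open scoped Classical

/-- A signed graph: a finite loopless multigraph together with a sign `+1` or `-1`
on each edge. -/
structure SignedGraph where
  /-- vertex type -/
  V : Type
  /-- edge type -/
  E : Type
  fintypeV : Fintype V
  fintypeE : Fintype E
  decEqV : DecidableEq V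
  /-- the two (distinct) endpoints of an edge, as an unordered pair -/
  ends : E → Sym2 V
  loopless : ∀ e : E, ¬ (ends e).IsDiag
  /-- the sign of an edge -/
  sign : E → ℤ
  sign_unit : ∀ e : E, sign e = 1 ∨ sign e = -1

attribute [instance] SignedGraph.fintypeV SignedGraph.fintypeE SignedGraph.decEqV

namespace SignedGraph

variable (G : SignedGraph)

/-- The degree of a vertex: the number of edges incident with it. -/
noncomputable def degree (v : G.V) : ℕ :=
  (Finset.univ.filter (fun e : G.E => v ∈ G.ends e)).card

/-- The maximum degree `Δ(G)`. -/
noncomputable def maxDegree : ℕ :=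
  Finset.univ.sup (fun v : G.V => G.degree v)

/-- Two vertices are adjacent if some edge joins them. -/
def Adj (v w : G.V) : Prop := ∃ e : G.E, G.ends e = s(v, w)

/-- The simple graph of the adjacency relation (underlying simplification). -/
def adjGraph : SimpleGraph G.V where
  Adj := G.Adj
  symm := ⟨fun _ _ h => by obtain ⟨e, he⟩ := h; exact ⟨e, he.trans (Sym2.eq_swap)⟩⟩
  loopless := ⟨fun v h => by
    obtain ⟨e, he⟩ := h
    exact G.loopless e (by rw [he]; exact Sym2.mk_isDiag_iff.mpr rfl)⟩

/-- A signed graph is connected if its underlying graph is connected. -/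
def Connected : Prop := G.adjGraph.Connected

/-- The underlying graph is simple: no two parallel edges. -/
def SimpleUnderlying : Prop := ∀ e f : G.E, G.ends e = G.ends f → e = f

/-- A (proper) coloring of a signed graph. -/
def IsColoring (φ : G.V → ℤ) : Prop :=
  ∀ (e : G.E) (v w : G.V), G.ends e = s(v, w) → φ v ≠ G.sign e * φ w

/-- The color set `Z_k`:  `Z_{2h} = {±1, …, ±h}` and `Z_{2h+1} = Z_{2h} ∪ {0}`. -/
def ZSet (k : ℕ) : Set ℤ := {x : ℤ | 2 * |x| ≤ (k : ℤ) ∧ (x = 0 → Odd k)}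

/-- The signed chromatic number `χ±(G)`: the least `k` such that `G` admits a
coloring with image contained in `Z_k`. -/
noncomputable def signedChromaticNumber : ℕ :=
  sInf {k : ℕ | ∃ φ : G.V → ℤ, G.IsColoring φ ∧ ∀ v : G.V, φ v ∈ ZSet k}

/-- `G` admits a coloring from the lists `L`. -/
def ListColorable (L : G.V → Finset ℤ) : Prop :=
  ∃ φ : G.V → ℤ, G.IsColoring φ ∧ ∀ v : G.V, φ v ∈ L v

/-- The signed choice number `χℓ±(G)`. -/
noncomputable def signedChoiceNumber : ℕ :=
  sInf {k : ℕ | ∀ L : G.V → Finset ℤ, (∀ v : G.V, (L v).card = k) → G.ListColorable L}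

/-- `G` is degree choosable. -/
def DegreeChoosable : Prop :=
  ∀ L : G.V → Finset ℤ, (∀ v : G.V, (L v).card = G.degree v) → G.ListColorable L

/-- `(G, L)` is an uncolorable pair. -/
def UncolorablePair (L : G.V → Finset ℤ) : Prop :=
  G.Connected ∧ (∀ v : G.V, G.degree v ≤ (L v).card) ∧ ¬ G.ListColorable L

/-- Walks in a signed multigraph. -/
inductive Walk (G : SignedGraph) : G.V → G.V → Type
  | nil (v : G.V) : Walk G v v
  | cons {v w u : G.V} (e : G.E) (he : G.ends e = s(v, w)) (p : Walk G w u) : Walk G v u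

namespace Walk

variable {G}

/-- The list of edges of a walk. -/
def edges : ∀ {v w : G.V}, Walk G v w → List G.E
  | _, _, .nil _ => []
  | _, _, .cons e _ p => e :: edges p

/-- The list of vertices of a walk. -/
def support : ∀ {v w : G.V}, Walk G v w → List G.V
  | _, _, .nil v => [v]
  | v, _, .cons _ _ p => v :: support p

/-- The length of a walk. -/
def length {v w : G.V} (p : Walk G v w) : ℕ := p.edges.length

/-- The sign product of a walk. -/
def signProd {v w : G.V} (p : Walk G v w) : ℤ := (p.edges.map G.sign).prod

/-- A cycle: a nonempty closed walk with no repeated edges and no repeated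
vertices (except the first = last). -/
def IsCycle {v : G.V} (p : Walk G v v) : Prop :=
  p.edges ≠ [] ∧ p.edges.Nodup ∧ p.support.tail.Nodup

end Walk

/-- A signed graph is balanced if every cycle has positive sign product. -/
def Balanced : Prop := ∀ (v : G.V) (p : Walk G v v), p.IsCycle → p.signProd = 1

/-- A signed graph is antibalanced if every even cycle has positive sign product
and every odd cycle has negative sign product. -/
def Antibalanced : Prop :=
  ∀ (v : G.V) (p : Walk G v v), p.IsCycle → p.signProd = (-1) ^ p.length

/-- `G` is balanced with parts `X`, `Y`: the vertex set is the disjoint union of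
`X` and `Y` and an edge is negative iff it joins `X` to `Y`. -/
def BalancedWithParts (X Y : Set G.V) : Prop :=
  X ∪ Y = Set.univ ∧ Disjoint X Y ∧
  ∀ (e : G.E) (v w : G.V), G.ends e = s(v, w) →
    (G.sign e = -1 ↔ (v ∈ X ∧ w ∈ Y) ∨ (v ∈ Y ∧ w ∈ X))

/-- The underlying graph is a complete (simple) graph. -/
def IsCompleteGraph : Prop :=
  G.SimpleUnderlying ∧ ∀ v w : G.V, v ≠ w → G.Adj v w

/-- `G` is a balanced complete graph. -/
def IsBalancedComplete : Prop := G.IsCompleteGraph ∧ G.Balanced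

/-- The underlying graph is a cycle. -/
def IsCycleGraph : Prop :=
  G.Connected ∧ G.SimpleUnderlying ∧ ∀ v : G.V, G.degree v = 2

/-- `G` is a balanced odd cycle. -/
def IsBalancedOddCycle : Prop :=
  G.IsCycleGraph ∧ G.Balanced ∧ Odd (Fintype.card G.V)

/-- `G` is an unbalanced even cycle. -/
def IsUnbalancedEvenCycle : Prop :=
  G.IsCycleGraph ∧ ¬ G.Balanced ∧ Even (Fintype.card G.V)

/-- Every edge of `G` comes in a pair of parallel edges of opposite sign, and
any two vertices are joined by at most two edges. -/
def Doubled : Prop :=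
  ∀ (e : G.E) (v w : G.V), G.ends e = s(v, w) →
    ∃ f : G.E, f ≠ e ∧ G.ends f = s(v, w) ∧ G.sign f = - G.sign e ∧
      ∀ g : G.E, G.ends g = s(v, w) → g = e ∨ g = f

/-- `G` is a `2Kₙ` for some `n ≥ 2`. -/
def IsDoubleComplete : Prop :=
  2 ≤ Fintype.card G.V ∧ G.Doubled ∧ ∀ v w : G.V, v ≠ w → G.Adj v w

/-- `G` is a `2Cₙ` for some odd `n ≥ 3`. -/
def IsDoubleOddCycle : Prop :=
  G.Connected ∧ G.Doubled ∧ (∀ v : G.V, G.degree v = 4) ∧ Odd (Fintype.card G.V)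

/-- A brick. -/
def IsBrick : Prop :=
  G.IsBalancedComplete ∨ G.IsBalancedOddCycle ∨ G.IsUnbalancedEvenCycle ∨
    G.IsDoubleComplete ∨ G.IsDoubleOddCycle

/-- A subgraph of a signed graph. -/
structure Subgraph (G : SignedGraph) where
  verts : Set G.V
  edges : Set G.E
  ends_mem : ∀ e ∈ edges, ∀ v ∈ G.ends e, v ∈ verts

namespace Subgraph

variable {G}

/-- A subgraph, regarded as a signed graph in its own right. -/
noncomputable def toSG (H : G.Subgraph) : SignedGraph where
  V := H.verts
  E := H.edges
  fintypeV := Fintype.ofFinite _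
  fintypeE := Fintype.ofFinite _
  decEqV := inferInstance
  ends := fun e =>
    s((⟨(G.ends e.1).out.1, H.ends_mem e.1 e.2 _ (Sym2.out_fst_mem _)⟩ : H.verts),
      (⟨(G.ends e.1).out.2, H.ends_mem e.1 e.2 _ (Sym2.out_snd_mem _)⟩ : H.verts))
  loopless := fun e h => by
    rw [Sym2.mk_isDiag_iff, Subtype.mk.injEq] at h
    exact G.loopless e.1 (by
      rw [← (G.ends e.1).out_eq]
      exact Sym2.mk_isDiag_iff.mpr h)
  sign := fun e => G.sign e.1
  sign_unit := fun e => G.sign_unit e.1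

/-- Delete a vertex (and all incident edges) from a subgraph. -/
def delete (H : G.Subgraph) (v : G.V) : G.Subgraph where
  verts := H.verts \ {v}
  edges := {e ∈ H.edges | v ∉ G.ends e}
  ends_mem := fun e he w hw =>
    ⟨H.ends_mem e he.1 w hw, fun h => he.2 (by rwa [Set.mem_singleton_iff.mp h] at hw)⟩

/-- Subgraph inclusion. -/
def Le (H K : G.Subgraph) : Prop := H.verts ⊆ K.verts ∧ H.edges ⊆ K.edges

/-- `v` is a separating (cut) vertex of the subgraph `H`. -/
def IsCutVertex (H : G.Subgraph) (v : G.V) : Prop :=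
  v ∈ H.verts ∧ (H.delete v).verts.Nonempty ∧ ¬ (H.delete v).toSG.Connected

/-- `B` is a block of `G`: a maximal connected subgraph without a cut vertex. -/
def IsBlock (B : G.Subgraph) : Prop :=
  B.toSG.Connected ∧ (∀ v : G.V, ¬ B.IsCutVertex v) ∧
  ∀ B' : G.Subgraph, B.Le B' → B'.toSG.Connected →
    (∀ v : G.V, ¬ B'.IsCutVertex v) → B'.Le B

/-- The degree of a vertex in a subgraph. -/
noncomputable def degree (H : G.Subgraph) (v : G.V) : ℕ :=
  (Finset.univ.filter (fun e : G.E => e ∈ H.edges ∧ v ∈ G.ends e)).card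

/-- The minimum degree of a subgraph. -/
noncomputable def minDegree (H : G.Subgraph) : ℕ :=
  sInf {d : ℕ | ∃ v ∈ H.verts, H.degree v = d}

/-- The subgraph admits a coloring from the lists `L`. -/
def ListColorable (H : G.Subgraph) (L : G.V → Finset ℤ) : Prop :=
  ∃ φ : G.V → ℤ,
    (∀ e ∈ H.edges, ∀ v w : G.V, G.ends e = s(v, w) → φ v ≠ G.sign e * φ w) ∧
    ∀ v ∈ H.verts, φ v ∈ L v

/-- A proper subgraph. -/
def IsProper (H : G.Subgraph) : Prop :=
  H.verts ≠ Set.univ ∨ H.edges ≠ Set.univ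

end Subgraph

/-- The subgraph consisting of all of `G`. -/
def topSubgraph : G.Subgraph := ⟨Set.univ, Set.univ, fun _ _ _ _ => trivial⟩

/-- A separating (cut) vertex of `G`. -/
def IsCutVertex (v : G.V) : Prop := G.topSubgraph.IsCutVertex v

/-- The coloring number `col(G)`: one plus the maximum over all (nonempty)
subgraphs of the minimum degree. -/
noncomputable def coloringNumber : ℕ :=
  1 + sSup {d : ℕ | ∃ H : G.Subgraph, H.verts.Nonempty ∧ H.minDegree = d}

/-- The subgraph induced by a vertex set `X`. -/
def induced (X : Set G.V) : G.Subgraph where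
  verts := X
  edges := {e : G.E | ∀ v ∈ G.ends e, v ∈ X}
  ends_mem := fun e he v hv => he v hv

/-- `G` is `L`-critical. -/
def LCritical (L : G.V → Finset ℤ) : Prop :=
  ¬ G.ListColorable L ∧ ∀ H : G.Subgraph, H.IsProper → H.ListColorable L

/-- `G` is `k`-critical (with respect to the signed chromatic number). -/
def KCritical (k : ℕ) : Prop :=
  G.signedChromaticNumber = k ∧
  ∀ H : G.Subgraph, H.IsProper → H.toSG.signedChromaticNumber ≤ k - 1

/-- `G` is `k`-list-critical. -/
def KListCritical (k : ℕ) : Prop :=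
  ∃ L : G.V → Finset ℤ, (∀ v : G.V, (L v).card = k - 1) ∧ G.LCritical L

/-- The signed graph `2H` obtained from a simple graph `H` by replacing every
edge by a pair of parallel edges, one positive and one negative. -/
noncomputable def double {W : Type} [Fintype W] [DecidableEq W] (H : SimpleGraph W) :
    SignedGraph where
  V := W
  E := H.edgeSet × Bool
  fintypeV := inferInstance
  fintypeE := Fintype.ofFinite _
  decEqV := inferInstance
  ends := fun e => e.1.1
  loopless := fun e => H.not_isDiag_of_mem_edgeSet e.1.2
  sign := fun e => if e.2 then 1 else -1
  sign_unit := fun e => by by_cases h : e.2 <;> simp [h]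

end SignedGraph

/-- For a finite simple graph `H`, the signed graph `2H`
satisfies `χ±(2H) = 2 χ(H) − 1`. -/
theorem signedChromaticNumber_double {W : Type} [Fintype W] [DecidableEq W]
    (H : SimpleGraph W) :
    (SignedGraph.double H).signedChromaticNumber = 2 * sInf {n : ℕ | H.Colorable n} - 1 := by

  classical
  set c := sInf {n : ℕ | H.Colorable n} with hcdef
  have hSne : {n : ℕ | H.Colorable n}.Nonempty := ⟨Fintype.card W, H.colorable_of_fintype⟩
  have hccol : H.Colorable c := Nat.sInf_mem hSne
  by_cases hW : Nonempty W
  · obtain ⟨v0⟩ := hW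
    have hc1 : 1 ≤ c := by
      by_contra h
      have hc0 : c = 0 := by omega
      rw [hc0] at hccol
      obtain ⟨C⟩ := hccol
      exact (C v0).elim0
    -- membership: 2c-1 works
    have mem : (2 * c - 1) ∈ {k : ℕ | ∃ φ : (SignedGraph.double H).V → ℤ,
        (SignedGraph.double H).IsColoring φ ∧ ∀ v, φ v ∈ SignedGraph.ZSet k} := by
      obtain ⟨C⟩ := hccol
      refine ⟨fun v => ((C v : ℕ) : ℤ), ?_, ?_⟩
      · intro e v w he hcontra
        have hadj : H.Adj v w := H.mem_edgeSet.mp (he ▸ e.1.2)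
        have hne : C v ≠ C w := C.valid hadj
        have hne' : ((C v : ℕ) : ℤ) ≠ ((C w : ℕ) : ℤ) := by
          intro h; exact hne (Fin.ext (by exact_mod_cast h))
        rcases (SignedGraph.double H).sign_unit e with hs | hs
        · rw [hs, one_mul] at hcontra; exact hne' hcontra
        · rw [hs, neg_one_mul] at hcontra
          have hcontra' : ((C v : ℕ) : ℤ) = -((C w : ℕ) : ℤ) := hcontra
          have h1 : (0:ℤ) ≤ ((C v : ℕ) : ℤ) := Int.natCast_nonneg _
          have h2 : (0:ℤ) ≤ ((C w : ℕ) : ℤ) := Int.natCast_nonneg _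
          have : ((C v : ℕ) : ℤ) = 0 ∧ ((C w : ℕ) : ℤ) = 0 := by omega
          exact hne' (by omega)
      · intro v
        have hlt : (C v : ℕ) < c := (C v).isLt
        constructor
        · rw [abs_of_nonneg (Int.natCast_nonneg _)]
          omega
        · intro _
          exact Nat.odd_iff.mpr (by omega)
    have lower : ∀ k ∈ {k : ℕ | ∃ φ : (SignedGraph.double H).V → ℤ,
        (SignedGraph.double H).IsColoring φ ∧ ∀ v, φ v ∈ SignedGraph.ZSet k},
        2 * c - 1 ≤ k := by
      rintro k ⟨φ, hcol, hmem⟩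
      have hb : ∀ v : W, 2 * (φ v).natAbs ≤ k := by
        intro v
        have := (hmem v).1
        rw [Int.abs_eq_natAbs] at this
        exact_mod_cast this
      have hz : ∀ v : W, (φ v).natAbs = 0 → k % 2 = 1 := by
        intro v h
        exact Nat.odd_iff.mp ((hmem v).2 (Int.natAbs_eq_zero.mp h))
      have hcolm : H.Colorable ((k+1)/2) := by
        refine ⟨⟨fun v => ⟨(φ v).natAbs + k % 2 - 1, ?_⟩, ?_⟩⟩
        · have h1 := hb v; have h2 := hz v; omega
        · intro a b hadj hfab
          have hval : (φ a).natAbs + k % 2 - 1 = (φ b).natAbs + k % 2 - 1 :=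
            congrArg Fin.val hfab
          have habs : (φ a).natAbs = (φ b).natAbs := by
            have h1 := hz a; have h2 := hz b; omega
          have hedge : s(a,b) ∈ H.edgeSet := H.mem_edgeSet.mpr hadj
          rcases Int.natAbs_eq_natAbs_iff.mp habs with h | h
          · exact hcol ⟨⟨s(a,b), hedge⟩, true⟩ a b rfl (by simpa [SignedGraph.double] using h)
          · exact hcol ⟨⟨s(a,b), hedge⟩, false⟩ a b rfl (by simpa [SignedGraph.double] using h)
      have hle : c ≤ (k+1)/2 := Nat.sInf_le hcolm
      omega
    apply le_antisymm
    · exact Nat.sInf_le mem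
    · have h := Nat.sInf_mem (⟨2 * c - 1, mem⟩ : Set.Nonempty _)
      exact lower _ h
  · have hE : IsEmpty W := not_nonempty_iff.mp hW
    have hc0 : c = 0 := by
      have h0 : H.Colorable 0 := ⟨⟨fun v => hE.elim v, fun {a b} h => hE.elim a⟩⟩
      rw [hcdef]
      exact Nat.eq_zero_of_le_zero (Nat.sInf_le h0)
    have hL : (SignedGraph.double H).signedChromaticNumber = 0 := by
      apply Nat.eq_zero_of_le_zero
      apply Nat.sInf_le
      exact ⟨fun v => 0, fun e v w h => hE.elim v, fun v => hE.elim v⟩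
    rw [hL, hc0]
end

section
/- Let (G,L) be an uncolorable pair. Then |L(v)| = d_G(v) for every vertex v ∈ V(G). -/
open scoped Classical

namespace SignedGraph

variable (G : SignedGraph)

variable {G : SignedGraph}

lemma aux_sign_mul_self (e : G.E) : G.sign e * G.sign e = 1 := by
  rcases G.sign_unit e with h | h <;> simp [h]

lemma aux_ends_ne {e : G.E} {u w : G.V} (h : G.ends e = s(u, w)) : u ≠ w := by
  rintro rfl
  exact G.loopless e (by rw [h]; exact Sym2.mk_isDiag_iff.mpr rfl)

lemma aux_ends_unique {e : G.E} {u w w' : G.V} (h : G.ends e = s(u, w))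
    (h' : G.ends e = s(u, w')) : w = w' := by
  have heq := h.symm.trans h'
  rw [Sym2.eq_iff] at heq
  rcases heq with ⟨-, rfl⟩ | ⟨h1, h2⟩
  · rfl
  · exact absurd h2.symm (aux_ends_ne h)

/-- Greedy coloring along an injective ordering: if at every vertex the number of
edges to "earlier" vertices is strictly less than the list size, then a coloring exists. -/
lemma aux_greedy (G : SignedGraph) (L : G.V → Finset ℤ) (ord : G.V → ℕ)
    (hinj : Function.Injective ord)
    (hS : ∀ u : G.V,
      (Finset.univ.filter
        (fun e : G.E => ∃ w, G.ends e = s(u, w) ∧ ord w < ord u)).card < (L u).card) :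
    G.ListColorable L := by
  suffices H : ∀ k : ℕ, ∃ φ : G.V → ℤ,
      (∀ u, ord u < k → φ u ∈ L u) ∧
      (∀ (e : G.E) (v w : G.V), G.ends e = s(v, w) → ord v < k → ord w < k →
        φ v ≠ G.sign e * φ w) by
    obtain ⟨φ, h1, h2⟩ := H ((Finset.univ.sup ord) + 1)
    have hb : ∀ v : G.V, ord v < Finset.univ.sup ord + 1 :=
      fun v => Nat.lt_succ_of_le (Finset.le_sup (Finset.mem_univ v))
    exact ⟨φ, fun e v w hvw => h2 e v w hvw (hb v) (hb w), fun v => h1 v (hb v)⟩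
  intro k
  induction k with
  | zero =>
    exact ⟨fun _ => 0, fun u hu => absurd hu (Nat.not_lt_zero _),
      fun e v w _ hv => absurd hv (Nat.not_lt_zero _)⟩
  | succ k ih =>
    obtain ⟨φ, hφL, hφc⟩ := ih
    by_cases hu : ∃ u : G.V, ord u = k
    · obtain ⟨u, hk⟩ := hu
      set S : Finset G.E := Finset.univ.filter
        (fun e : G.E => ∃ w, G.ends e = s(u, w) ∧ ord w < ord u) with hSdef
      classical
      set F : Finset ℤ := S.image
        (fun e => G.sign e * φ (if h : u ∈ G.ends e then Sym2.Mem.other' h else u)) with hFdef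
      have hFcard : F.card < (L u).card :=
        lt_of_le_of_lt Finset.card_image_le (hS u)
      have hnsub : ¬ L u ⊆ F := fun hsub =>
        absurd (Finset.card_le_card hsub) (not_le.mpr hFcard)
      obtain ⟨c, hcL, hcF⟩ := Finset.not_subset.mp hnsub
      set φ' : G.V → ℤ := Function.update φ u c with hφ'def
      -- key claim: forbidden values are in F
      have claim : ∀ (e : G.E) (w : G.V), G.ends e = s(u, w) → ord w < k →
          G.sign e * φ w ∈ F := by
        intro e w hew hwlt
        have heS : e ∈ S := by
          rw [hSdef, Finset.mem_filter]
          exact ⟨Finset.mem_univ _, ⟨w, hew, by omega⟩⟩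
        have hmem : u ∈ G.ends e := by rw [hew]; exact Sym2.mem_mk_left u w
        have hother : (if h : u ∈ G.ends e then Sym2.Mem.other' h else u) = w := by
          rw [dif_pos hmem]
          exact aux_ends_unique ((Sym2.other_spec' hmem).symm) hew
        rw [hFdef]
        exact Finset.mem_image.mpr ⟨e, heS, by rw [hother]⟩
      refine ⟨φ', ?_, ?_⟩
      · intro x hx
        by_cases hxu : x = u
        · subst hxu; rw [hφ'def, Function.update_self]; exact hcL
        · have hxk : ord x ≠ k := fun hc => hxu (hinj (hc.trans hk.symm))
          have : ord x < k := by omega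
          rw [hφ'def, Function.update_of_ne hxu]
          exact hφL x this
      · intro e v w hvw hv hw
        by_cases hvu : v = u
        · by_cases hwu : w = u
          · exact absurd (hwu.trans hvu.symm).symm (aux_ends_ne hvw)
          · have hwk : ord w ≠ k := fun hc => hwu (hinj (hc.trans hk.symm))
            have hwlt : ord w < k := by omega
            have hvw' : G.ends e = s(u, w) := by rw [← hvu]; exact hvw
            rw [hφ'def, hvu, Function.update_self, Function.update_of_ne hwu]
            exact fun hcc => hcF (hcc ▸ claim e w hvw' hwlt)
        · have hvk : ord v ≠ k := fun hc => hvu (hinj (hc.trans hk.symm))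
          have hvlt : ord v < k := by omega
          by_cases hwu : w = u
          · subst hwu
            rw [hφ'def, Function.update_self, Function.update_of_ne hvu]
            have hvw' : G.ends e = s(w, v) := hvw.trans Sym2.eq_swap
            have hforb : G.sign e * φ v ∈ F := claim e v hvw' hvlt
            intro hcc
            apply hcF
            have : G.sign e * φ v = c := by
              rw [hcc, ← mul_assoc, aux_sign_mul_self, one_mul]
            rwa [this] at hforb
          · have hwk : ord w ≠ k := fun hc => hwu (hinj (hc.trans hk.symm))
            have hwlt : ord w < k := by omega
            rw [hφ'def, Function.update_of_ne hvu, Function.update_of_ne hwu]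
            exact hφc e v w hvw hvlt hwlt
    · refine ⟨φ, fun x hx => hφL x ?_, fun e v w hvw hv hw => hφc e v w hvw ?_ ?_⟩ <;>
      · first
        | (have : ord x ≠ k := fun hc => hu ⟨x, hc⟩; omega)
        | (have : ord v ≠ k := fun hc => hu ⟨v, hc⟩; omega)
        | (have : ord w ≠ k := fun hc => hu ⟨w, hc⟩; omega)

end SignedGraph

/-- In an uncolorable pair `(G,L)`, `|L(v)| = d_G(v)` for every vertex. -/
theorem uncolorablePair_card_eq_degree (G : SignedGraph) (L : G.V → Finset ℤ)
    (h : G.UncolorablePair L) :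
    ∀ v : G.V, (L v).card = G.degree v := by
  obtain ⟨hconn, hge, hncol⟩ := h
  intro v0
  refine le_antisymm ?_ (hge v0)
  by_contra hlt'
  have hlt : G.degree v0 < (L v0).card := by omega
  apply hncol
  -- set up the ordering by decreasing distance to `v0`
  have : Nonempty G.V := ⟨v0⟩
  set N : ℕ := Fintype.card G.V with hN
  set idx : G.V → ℕ := fun u => ((Fintype.equivFin G.V) u : ℕ) with hidx
  have hidx_lt : ∀ u, idx u < N := fun u => ((Fintype.equivFin G.V) u).isLt
  have hidx_inj : Function.Injective idx := fun a b hab =>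
    (Fintype.equivFin G.V).injective (Fin.ext hab)
  set d : G.V → ℕ := fun u => G.adjGraph.dist u v0 with hd
  have hreach : ∀ u : G.V, G.adjGraph.Reachable u v0 := fun u => hconn.preconnected u v0
  have hd_lt : ∀ u, d u < N := by
    intro u
    obtain ⟨p, hp, hlen⟩ := (hreach u).exists_path_of_dist
    calc d u = p.length := hlen.symm
      _ < N := hp.length_lt
  set ord : G.V → ℕ := fun u => (N - d u) * N + idx u with hord
  have hord_inj : Function.Injective ord := by
    intro a b hab
    apply hidx_inj
    have ha : (idx a + (N - d a) * N) % N = (idx b + (N - d b) * N) % N := by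
      rw [add_comm (idx a), add_comm (idx b)]; exact congrArg (· % N) hab
    rwa [Nat.add_mul_mod_self_right, Nat.add_mul_mod_self_right,
      Nat.mod_eq_of_lt (hidx_lt a), Nat.mod_eq_of_lt (hidx_lt b)] at ha
  have hmono : ∀ a b : G.V, d b < d a → ord a < ord b := by
    intro a b hab
    have h1 : N - d a + 1 ≤ N - d b := by
      have := hd_lt a; omega
    calc ord a = (N - d a) * N + idx a := rfl
      _ < (N - d a) * N + N := by have := hidx_lt a; omega
      _ = (N - d a + 1) * N := by ring
      _ ≤ (N - d b) * N := Nat.mul_le_mul_right _ h1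
      _ ≤ (N - d b) * N + idx b := Nat.le_add_right _ _
  have hlater : ∀ u : G.V, u ≠ v0 → ∃ (e : G.E) (w : G.V),
      G.ends e = s(u, w) ∧ ord u < ord w := by
    intro u hne
    obtain ⟨p, hlen⟩ := (hreach u).exists_walk_length_eq_dist
    cases p with
    | nil => exact absurd rfl hne
    | @cons _ w _ hadj q =>
      obtain ⟨e, he⟩ : G.Adj u w := hadj
      refine ⟨e, w, he, hmono u w ?_⟩
      have hq : d w ≤ q.length := SimpleGraph.dist_le q
      have hL : q.length + 1 = d u := by
        exact hlen
      show d w < d u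
      omega
  -- apply the greedy lemma
  apply SignedGraph.aux_greedy G L ord hord_inj
  intro u
  classical
  set S : Finset G.E := Finset.univ.filter
    (fun e : G.E => ∃ w, G.ends e = s(u, w) ∧ ord w < ord u) with hSdef
  set I : Finset G.E := Finset.univ.filter (fun e : G.E => u ∈ G.ends e) with hIdef
  have hIdeg : I.card = G.degree u := rfl
  have hsub : S ⊆ I := by
    intro e he
    rw [hSdef, Finset.mem_filter] at he
    obtain ⟨-, w, hw, -⟩ := he
    rw [hIdef, Finset.mem_filter]
    exact ⟨Finset.mem_univ _, by rw [hw]; exact Sym2.mem_mk_left u w⟩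
  by_cases huv : u = v0
  · subst huv
    calc S.card ≤ I.card := Finset.card_le_card hsub
      _ = G.degree u := hIdeg
      _ < (L u).card := hlt
  · obtain ⟨e0, w0, he0, hw0⟩ := hlater u huv
    have he0I : e0 ∈ I := by
      rw [hIdef, Finset.mem_filter]
      exact ⟨Finset.mem_univ _, by rw [he0]; exact Sym2.mem_mk_left u w0⟩
    have he0S : e0 ∉ S := by
      rw [hSdef, Finset.mem_filter]
      rintro ⟨-, w, hw, hwlt⟩
      rw [SignedGraph.aux_ends_unique hw he0] at hwlt
      omega
    have hss : S ⊂ I := Finset.ssubset_iff_of_subset hsub |>.mpr ⟨e0, he0I, he0S⟩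
    calc S.card < I.card := Finset.card_lt_card hss
      _ = G.degree u := hIdeg
      _ ≤ (L u).card := hge u
end

section
/- Let (G,L) be an uncolorable pair. Then any two adjacent vertices of G are joined either by exactly one edge or by exactly two parallel edges of opposite sign; in particular no two vertices are joined by two parallel edges of the same sign, and no two vertices are joined by more than two parallel edges. -/
open scoped Classical

namespace SignedGraph

variable {G : SignedGraph}

variable (G) in
-- down set of incident (edge, lower endpoint) pairs
noncomputable def downSet (r : G.V → ℕ) (v : G.V) : Finset (G.E × G.V) :=
  Finset.univ.filter (fun p : G.E × G.V => G.ends p.1 = s(v, p.2) ∧ r p.2 < r v)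

lemma mem_downSet {r : G.V → ℕ} {v : G.V} {p : G.E × G.V} :
    p ∈ G.downSet r v ↔ G.ends p.1 = s(v, p.2) ∧ r p.2 < r v := by
  simp [downSet]

noncomputable def greedy (r : G.V → ℕ) (L : G.V → Finset ℤ) (v : G.V) : ℤ :=
  let F : Finset ℤ :=
    (G.downSet r v).attach.image (fun p => G.sign p.1.1 * greedy r L p.1.2)
  if h : (L v \ F).Nonempty then h.choose else 0
termination_by r v
decreasing_by exact (mem_downSet.mp p.2).2

variable (G) in
noncomputable def Fset (r : G.V → ℕ) (L : G.V → Finset ℤ) (v : G.V) : Finset ℤ :=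
  (G.downSet r v).image (fun p => G.sign p.1 * greedy r L p.2)

lemma greedy_eq (r : G.V → ℕ) (L : G.V → Finset ℤ) (v : G.V) :
    greedy r L v =
      if h : (L v \ G.Fset r L v).Nonempty then h.choose else 0 := by
  rw [greedy]
  have : ((G.downSet r v).attach.image (fun p => G.sign p.1.1 * greedy r L p.1.2))
      = G.Fset r L v := by
    unfold Fset
    ext x
    simp only [Finset.mem_image, Finset.mem_attach, true_and, Subtype.exists]
    constructor
    · rintro ⟨a, hab, rfl⟩; exact ⟨a, hab, rfl⟩
    · rintro ⟨a, hab, rfl⟩; exact ⟨a, hab, rfl⟩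
  rw [this]

lemma greedy_mem {r : G.V → ℕ} {L : G.V → Finset ℤ} {v : G.V}
    (h : (L v \ G.Fset r L v).Nonempty) :
    greedy r L v ∈ L v \ G.Fset r L v := by
  rw [greedy_eq, dif_pos h]
  exact h.choose_spec

/-- endpoints are distinct -/
lemma ne_of_ends {e : G.E} {v w : G.V} (he : G.ends e = s(v, w)) : v ≠ w := by
  intro h
  exact G.loopless e (by rw [he, h]; exact Sym2.mk_isDiag_iff.mpr rfl)

lemma ends_right_inj {e : G.E} {v w w' : G.V} (he : G.ends e = s(v, w))
    (he' : G.ends e = s(v, w')) : w = w' := by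
  have h : s(v, w) = s(v, w') := he.symm.trans he'
  rw [Sym2.eq_iff] at h
  rcases h with ⟨-, h⟩ | ⟨h1, h2⟩
  · exact h
  · exact absurd rfl (ne_of_ends (by rw [he, h2]))

/-- pairs in the down set inject into incident edges -/
lemma downSet_fst_injOn (r : G.V → ℕ) (v : G.V) :
    Set.InjOn Prod.fst (G.downSet r v : Set (G.E × G.V)) := by
  intro p hp q hq h
  rw [Finset.mem_coe, mem_downSet] at hp hq
  have := ends_right_inj (hp.1) (h ▸ hq.1)
  exact Prod.ext h this

lemma card_downSet_le (r : G.V → ℕ) (v : G.V) :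
    (G.downSet r v).card ≤ G.degree v := by
  classical
  apply Finset.card_le_card_of_injOn Prod.fst
  · intro p hp
    rw [Finset.mem_coe, mem_downSet] at hp
    simp only [degree, Finset.mem_coe, Finset.mem_filter, Finset.mem_univ, true_and]
    rw [hp.1]; exact Sym2.mem_mk_left _ _
  · exact fun p hp q hq h => downSet_fst_injOn r v (by simpa using hp) (by simpa using hq) h

lemma card_downSet_le_sub (r : G.V → ℕ) (v : G.V) {estar : G.E} {y : G.V}
    (hy : G.ends estar = s(v, y)) (hr : ¬ r y < r v) :
    (G.downSet r v).card + 1 ≤ G.degree v := by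
  classical
  have hmem : estar ∈ Finset.univ.filter (fun e : G.E => v ∈ G.ends e) := by
    simp only [Finset.mem_filter, Finset.mem_univ, true_and]
    rw [hy]; exact Sym2.mem_mk_left _ _
  have hsub : (G.downSet r v).card ≤
      ((Finset.univ.filter (fun e : G.E => v ∈ G.ends e)).erase estar).card := by
    apply Finset.card_le_card_of_injOn Prod.fst
    · intro p hp
      rw [Finset.mem_coe, mem_downSet] at hp
      rw [Finset.mem_coe, Finset.mem_erase]
      constructor
      · intro h
        exact hr ((ends_right_inj (h ▸ hp.1) hy) ▸ hp.2)
      · simp only [Finset.mem_filter, Finset.mem_univ, true_and]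
        rw [hp.1]; exact Sym2.mem_mk_left _ _
    · exact fun p hp q hq h => downSet_fst_injOn r v (by simpa using hp) (by simpa using hq) h
  rw [Finset.card_erase_of_mem hmem] at hsub
  have hpos : 0 < (Finset.univ.filter (fun e : G.E => v ∈ G.ends e)).card :=
    Finset.card_pos.mpr ⟨estar, hmem⟩
  unfold degree
  omega

/-- The greedy coloring works. -/
theorem exists_coloring (r : G.V → ℕ) (L : G.V → Finset ℤ)
    (hinj : Function.Injective r)
    (hlt : ∀ v, (G.Fset r L v).card < (L v).card) :
    ∃ φ : G.V → ℤ, (∀ (e : G.E) (v w : G.V), G.ends e = s(v, w) → φ v ≠ G.sign e * φ w) ∧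
      ∀ v, φ v ∈ L v := by
  classical
  set φ := greedy r L with hφ
  have hmem : ∀ v, φ v ∈ L v \ G.Fset r L v := by
    intro v
    apply greedy_mem
    rw [Finset.sdiff_nonempty]
    intro hsub
    exact absurd (Finset.card_le_card hsub) (not_le.mpr (hlt v))
  have key : ∀ (e : G.E) (v w : G.V), G.ends e = s(v, w) → r w < r v →
      φ v ≠ G.sign e * φ w := by
    intro e v w he hr hEq
    have hd : (e, w) ∈ G.downSet r v := mem_downSet.mpr ⟨he, hr⟩
    have : G.sign e * φ w ∈ G.Fset r L v := Finset.mem_image_of_mem _ hd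
    exact (Finset.mem_sdiff.mp (hmem v)).2 (hEq ▸ this)
  refine ⟨φ, ?_, fun v => (Finset.mem_sdiff.mp (hmem v)).1⟩
  intro e v w he
  have hvw : v ≠ w := ne_of_ends he
  rcases lt_or_gt_of_ne (fun h => hvw (hinj h)) with h | h
  · -- r v < r w
    have hwv : G.ends e = s(w, v) := he.trans Sym2.eq_swap
    have h2 := key e w v hwv h
    intro hEq
    apply h2
    have hs2 : G.sign e * G.sign e = 1 := by
      rcases G.sign_unit e with h | h <;> rw [h] <;> ring
    rw [hEq, ← mul_assoc, hs2, one_mul]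
  · exact key e v w he h


theorem listColorable_of_twin (G : SignedGraph) (L : G.V → Finset ℤ)
    (hconn : G.Connected) (hdeg : ∀ v : G.V, G.degree v ≤ (L v).card)
    {u₀ x : G.V} {e₀ f₀ : G.E} (hef : e₀ ≠ f₀)
    (he : G.ends e₀ = s(u₀, x)) (hf : G.ends f₀ = s(u₀, x))
    (hs : G.sign e₀ = G.sign f₀) : G.ListColorable L := by
  classical
  set n := Fintype.card G.V with hn
  have hnpos : 0 < n := Fintype.card_pos_iff.mpr ⟨u₀⟩
  set en : G.V ≃ Fin n := Fintype.equivFin G.V with hen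
  set r : G.V → ℕ := fun v => n * (n - G.adjGraph.dist v u₀) + (en v : ℕ) with hr
  have henlt : ∀ v, (en v : ℕ) < n := fun v => (en v).isLt
  have hconn' : G.adjGraph.Connected := hconn
  have hdlt : ∀ v, G.adjGraph.dist v u₀ < n := by
    intro v
    obtain ⟨p, hp, hlen⟩ := hconn'.exists_path_of_dist v u₀
    have := hp.length_lt
    omega
  have hd0 : ∀ v, G.adjGraph.dist v u₀ = 0 ↔ v = u₀ := fun v => hconn'.dist_eq_zero_iff
  have hinj : Function.Injective r := by
    intro a b hab
    have h1 : r a % n = (en a : ℕ) := by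
      simp only [hr, Nat.mul_add_mod]
      exact Nat.mod_eq_of_lt (henlt a)
    have h2 : r b % n = (en b : ℕ) := by
      simp only [hr, Nat.mul_add_mod]
      exact Nat.mod_eq_of_lt (henlt b)
    have : (en a : ℕ) = (en b : ℕ) := by rw [← h1, ← h2, hab]
    exact en.injective (Fin.ext this)
  have hmax : ∀ v, v ≠ u₀ → r v < r u₀ := by
    intro v hv
    have hdv : 1 ≤ G.adjGraph.dist v u₀ := by
      have := (hd0 v).not.mpr hv
      omega
    have h1 : r v < n * (n - G.adjGraph.dist v u₀ + 1) := by
      simp only [hr]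
      have := henlt v
      nlinarith [Nat.le_refl (n * (n - G.adjGraph.dist v u₀))]
    have h2 : n * (n - G.adjGraph.dist v u₀ + 1) ≤ n * n := by
      apply Nat.mul_le_mul_left
      omega
    have h3 : n * n ≤ r u₀ := by
      simp only [hr]
      have : G.adjGraph.dist u₀ u₀ = 0 := (hd0 u₀).mpr rfl
      rw [this]
      simp
    omega
  have hup : ∀ v, v ≠ u₀ → ∃ (estar : G.E) (y : G.V), G.ends estar = s(v, y) ∧ r v < r y := by
    intro v hv
    have hdv : G.adjGraph.dist v u₀ ≠ 0 := (hd0 v).not.mpr hv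
    obtain ⟨p, hlen⟩ := hconn'.exists_walk_length_eq_dist v u₀
    cases p with
    | nil => simp at hdv
    | @cons _ y _ hadj q =>
      obtain ⟨estar, hends⟩ := (hadj : G.Adj v y)
      refine ⟨estar, y, hends, ?_⟩
      have hqd : G.adjGraph.dist y u₀ ≤ q.length := SimpleGraph.dist_le q
      have hql : q.length + 1 = G.adjGraph.dist v u₀ := by
        rw [← hlen]; rfl
      have hdy : G.adjGraph.dist y u₀ < G.adjGraph.dist v u₀ := by omega
      have h1 : n * (n - G.adjGraph.dist y u₀) ≥ n * (n - G.adjGraph.dist v u₀) + n := by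
        have : n - G.adjGraph.dist v u₀ + 1 ≤ n - G.adjGraph.dist y u₀ := by
          have := hdlt v
          omega
        calc n * (n - G.adjGraph.dist v u₀) + n = n * (n - G.adjGraph.dist v u₀ + 1) := by ring
          _ ≤ n * (n - G.adjGraph.dist y u₀) := Nat.mul_le_mul_left n this
      have := henlt v
      simp only [hr]
      omega
  have hlt : ∀ v, (G.Fset r L v).card < (L v).card := by
    intro v
    by_cases hv : v = u₀
    · -- the two parallel same-sign edges collapse in the image
      have he' : G.ends e₀ = s(v, x) := by rw [hv]; exact he
      have hf' : G.ends f₀ = s(v, x) := by rw [hv]; exact hf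
      have hxv : v ≠ x := ne_of_ends he'
      have hrx : r x < r v := by
        rw [hv]
        exact hmax x (fun h => hxv (hv.trans h.symm))
      have hp0 : (e₀, x) ∈ G.downSet r v := mem_downSet.mpr ⟨he', hrx⟩
      have hp1 : (f₀, x) ∈ G.downSet r v := mem_downSet.mpr ⟨hf', hrx⟩
      have himg : G.Fset r L v =
          ((G.downSet r v).erase (f₀, x)).image (fun p => G.sign p.1 * greedy r L p.2) := by
        unfold Fset
        apply Finset.Subset.antisymm
        · intro z hz
          obtain ⟨p, hp, rfl⟩ := Finset.mem_image.mp hz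
          by_cases hpf : p = (f₀, x)
          · subst hpf
            apply Finset.mem_image.mpr
            refine ⟨(e₀, x), Finset.mem_erase.mpr ⟨?_, hp0⟩, ?_⟩
            · simp only [ne_eq, Prod.mk.injEq, not_and]
              intro h; exact absurd h hef
            · simp [hs]
          · exact Finset.mem_image.mpr ⟨p, Finset.mem_erase.mpr ⟨hpf, hp⟩, rfl⟩
        · exact Finset.image_subset_image (Finset.erase_subset _ _)
      have hc1 : (G.Fset r L v).card ≤ ((G.downSet r v).erase (f₀, x)).card := by
        rw [himg]; exact Finset.card_image_le
      rw [Finset.card_erase_of_mem hp1] at hc1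
      have hc2 := card_downSet_le (G := G) r v
      have hpos : 0 < (G.downSet r v).card := Finset.card_pos.mpr ⟨_, hp1⟩
      have hdegpos : 0 < G.degree v := by
        apply Finset.card_pos.mpr
        refine ⟨e₀, ?_⟩
        simp only [Finset.mem_filter, Finset.mem_univ, true_and]
        rw [he']; exact Sym2.mem_mk_left _ _
      have := hdeg v
      omega
    · obtain ⟨estar, y, hends, hry⟩ := hup v hv
      have hc1 : (G.Fset r L v).card ≤ (G.downSet r v).card := Finset.card_image_le
      have hc2 := card_downSet_le_sub (G := G) r v hends (not_lt.mpr (le_of_lt hry))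
      have := hdeg v
      omega
  obtain ⟨φ, hcol, hmem⟩ := exists_coloring (G := G) r L hinj hlt
  exact ⟨φ, hcol, hmem⟩

end SignedGraph


/-- In an uncolorable pair, any two adjacent vertices are joined
by exactly one edge or by exactly two parallel edges of opposite sign. -/
theorem uncolorablePair_multiplicity (G : SignedGraph) (L : G.V → Finset ℤ)
    (h : G.UncolorablePair L) :
    ∀ v w : G.V, G.Adj v w →
      (∃! e : G.E, G.ends e = s(v, w)) ∨
      (∃ e f : G.E, e ≠ f ∧ G.ends e = s(v, w) ∧ G.ends f = s(v, w) ∧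
        G.sign e = - G.sign f ∧ ∀ g : G.E, G.ends g = s(v, w) → g = e ∨ g = f) := by
  classical
  obtain ⟨hconn, hdeg, hncol⟩ := h
  intro v w hadj
  obtain ⟨e, he⟩ := hadj
  set S : Finset G.E := Finset.univ.filter (fun g => G.ends g = s(v, w)) with hS
  have hmemS : ∀ g : G.E, g ∈ S ↔ G.ends g = s(v, w) := by
    intro g; simp [hS]
  have heS : e ∈ S := (hmemS e).mpr he
  have hinj : ∀ a ∈ S, ∀ b ∈ S, G.sign a = G.sign b → a = b := by
    intro a ha b hb hab
    by_contra hne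
    exact hncol (SignedGraph.listColorable_of_twin G L hconn hdeg hne
      ((hmemS a).mp ha) ((hmemS b).mp hb) hab)
  have hcard : S.card ≤ 2 := by
    have h1 : S.card = (S.image G.sign).card :=
      (Finset.card_image_of_injOn (fun a ha b hb hab => hinj a ha b hb hab)).symm
    have h2 : S.image G.sign ⊆ ({1, -1} : Finset ℤ) := by
      intro z hz
      obtain ⟨a, _, rfl⟩ := Finset.mem_image.mp hz
      rcases G.sign_unit a with h | h <;> simp [h]
    calc S.card = (S.image G.sign).card := h1
      _ ≤ ({1, -1} : Finset ℤ).card := Finset.card_le_card h2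
      _ ≤ 2 := by norm_num
  have hpos : 1 ≤ S.card := Finset.card_pos.mpr ⟨e, heS⟩
  by_cases h2 : S.card = 1
  · left
    obtain ⟨a, hSa⟩ := Finset.card_eq_one.mp h2
    refine ⟨e, he, fun g hg => ?_⟩
    have hg' : g ∈ S := (hmemS g).mpr hg
    rw [hSa, Finset.mem_singleton] at hg'
    rw [hSa, Finset.mem_singleton] at heS
    rw [hg', heS]
  · have h2' : S.card = 2 := by omega
    obtain ⟨a, b, hab, hSab⟩ := Finset.card_eq_two.mp h2'
    have haS : a ∈ S := by rw [hSab]; simp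
    have hbS : b ∈ S := by rw [hSab]; simp
    have hsign : G.sign a = - G.sign b := by
      have hne : G.sign a ≠ G.sign b := fun hEq => hab (hinj a haS b hbS hEq)
      rcases G.sign_unit a with h1 | h1 <;> rcases G.sign_unit b with hh | hh <;>
        rw [h1, hh] at hne ⊢
      all_goals omega
    right
    refine ⟨a, b, hab, (hmemS a).mp haS, (hmemS b).mp hbS, hsign, fun g hg => ?_⟩
    have hg' : g ∈ S := (hmemS g).mpr hg
    rw [hSab] at hg'
    simpa using hg'
end

section
/- Let (G,L) be an uncolorable pair and suppose G is a block (i.e., G is connected and has no separating vertex). Then every edge e of G joining vertices v and w satisfies L(v) = σ(e)·L(w). Moreover: (1) if all edges of G are positive, then there is a color set C with L(v) = C for all v ∈ V(G); (2) if G has at least one negative edge, then either there is a symmetric color set C with L(v) = C for all v ∈ V(G), or G is balanced with parts X, Y and there is a color set C with L(v) = C for all v ∈ X and L(v) = −C for all v ∈ Y. As a consequence, G is regular. -/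
open scoped Classical

namespace SignedGraph

variable {G : SignedGraph}

lemma other_unique (e : G.E) {v u w : G.V} (h1 : G.ends e = s(v, u))
    (h2 : G.ends e = s(v, w)) : w = u := by
  rw [h1] at h2
  rcases Sym2.eq_iff.mp h2 with ⟨-, hh⟩ | ⟨hh1, hh2⟩
  · exact hh.symm
  · rw [hh2] at h1
    exact absurd (h1 ▸ Sym2.mk_isDiag_iff.mpr rfl) (G.loopless e)

lemma sign_mul_sign (e : G.E) (x : ℤ) : G.sign e * (G.sign e * x) = x := by
  rcases G.sign_unit e with h | h <;> rw [h] <;> ring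

lemma sign_ne_zero (e : G.E) : G.sign e ≠ 0 := by
  rcases G.sign_unit e with h | h <;> rw [h] <;> norm_num

/-- The greedy coloring lemma. -/
lemma greedy_s7 (A : G.V → Finset ℤ) (idx : G.V → ℕ)
    (hinj : Function.Injective idx)
    (hlt : ∀ v, (Finset.univ.filter
        (fun e : G.E => ∃ w, G.ends e = s(v, w) ∧ idx w < idx v)).card < (A v).card) :
    ∃ φ : G.V → ℤ, G.IsColoring φ ∧ ∀ v, φ v ∈ A v := by
  have key : ∀ n : ℕ, ∃ φ : G.V → ℤ,
      (∀ v, idx v < n → φ v ∈ A v) ∧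
      (∀ e (v w : G.V), G.ends e = s(v, w) → idx v < n → idx w < n →
        φ v ≠ G.sign e * φ w) := by
    intro n
    induction n with
    | zero =>
        exact ⟨fun _ => 0, fun v hv => absurd hv (Nat.not_lt_zero _),
          fun e v w _ hv _ => absurd hv (Nat.not_lt_zero _)⟩
    | succ n ih =>
        obtain ⟨φ, hmem, hprop⟩ := ih
        by_cases hex : ∃ v, idx v = n
        · obtain ⟨v, hv⟩ := hex
          set P : Finset (G.E × G.V) :=
            (Finset.univ ×ˢ Finset.univ).filter
              (fun p => G.ends p.1 = s(v, p.2) ∧ idx p.2 < idx v) with hP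
          set F : Finset ℤ := P.image (fun p => G.sign p.1 * φ p.2) with hF
          have hcard : F.card < (A v).card := by
            have h1 : F.card ≤ P.card := Finset.card_image_le
            have h2 : P.card ≤ (Finset.univ.filter
                (fun e : G.E => ∃ w, G.ends e = s(v, w) ∧ idx w < idx v)).card := by
              apply Finset.card_le_card_of_injOn (fun p => p.1)
              · intro p hp
                simp only [hP, Finset.mem_coe, Finset.mem_filter, Finset.mem_product, Finset.mem_univ,
                  true_and] at hp ⊢
                exact ⟨p.2, hp⟩
              · intro p hp q hq hpq
                simp only [hP, Finset.coe_filter, Set.mem_setOf_eq,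
                  Finset.mem_product, Finset.mem_univ, true_and] at hp hq
                replace hpq : p.1 = q.1 := hpq
                have h2' : G.ends p.1 = s(v, q.2) := by rw [hpq]; exact hq.1
                have := other_unique (G := G) p.1 hp.1 h2'
                exact Prod.ext hpq this.symm
            exact lt_of_le_of_lt (le_trans h1 h2) (hlt v)
          have hne : ((A v) \ F).Nonempty := by
            rw [← Finset.card_pos]
            have := Finset.le_card_sdiff F (A v)
            omega
          obtain ⟨c, hc⟩ := hne
          have hcA : c ∈ A v := (Finset.mem_sdiff.mp hc).1
          have hcF : c ∉ F := (Finset.mem_sdiff.mp hc).2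
          refine ⟨Function.update φ v c, ?_, ?_⟩
          · intro u hu
            by_cases huv : u = v
            · subst huv; rw [Function.update_self]; exact hcA
            · rw [Function.update_of_ne huv]
              exact hmem u (by
                have : idx u ≠ n := fun hh => huv (hinj (hh.trans hv.symm))
                omega)
          · intro e x y hexy hx hy
            by_cases hxv : x = v <;> by_cases hyv : y = v
            · subst hxv; subst hyv
              exact absurd (hexy ▸ Sym2.mk_isDiag_iff.mpr rfl) (G.loopless e)
            · subst hxv
              rw [Function.update_self, Function.update_of_ne hyv]
              intro hcc
              apply hcF
              rw [hF, Finset.mem_image]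
              refine ⟨(e, y), ?_, hcc.symm⟩
              simp only [hP, Finset.mem_filter, Finset.mem_product, Finset.mem_univ,
                true_and]
              have hyn : idx y < n := by
                have : idx y ≠ n := fun hh => hyv (hinj (hh.trans hv.symm))
                omega
              exact ⟨hexy, by omega⟩
            · subst hyv
              rw [Function.update_self, Function.update_of_ne hxv]
              intro hcc
              apply hcF
              rw [hF, Finset.mem_image]
              refine ⟨(e, x), ?_, ?_⟩
              · simp only [hP, Finset.mem_filter, Finset.mem_product, Finset.mem_univ,
                  true_and]
                have hxn : idx x < n := by
                  have : idx x ≠ n := fun hh => hxv (hinj (hh.trans hv.symm))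
                  omega
                exact ⟨hexy.trans Sym2.eq_swap, by omega⟩
              · rw [hcc, sign_mul_sign]
            · rw [Function.update_of_ne hxv, Function.update_of_ne hyv]
              have hxn : idx x < n := by
                have : idx x ≠ n := fun hh => hxv (hinj (hh.trans hv.symm))
                omega
              have hyn : idx y < n := by
                have : idx y ≠ n := fun hh => hyv (hinj (hh.trans hv.symm))
                omega
              exact hprop e x y hexy hxn hyn
        · refine ⟨φ, ?_, ?_⟩
          · intro u hu
            exact hmem u (by
              have : idx u ≠ n := fun hh => hex ⟨u, hh⟩
              omega)
          · intro e x y hexy hx hy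
            have hxn : idx x < n := by
              have : idx x ≠ n := fun hh => hex ⟨x, hh⟩
              omega
            have hyn : idx y < n := by
              have : idx y ≠ n := fun hh => hex ⟨y, hh⟩
              omega
            exact hprop e x y hexy hxn hyn
  obtain ⟨φ, hmem, hprop⟩ := key (Finset.univ.sup idx + 1)
  have hall : ∀ v : G.V, idx v < Finset.univ.sup idx + 1 := fun v =>
    Nat.lt_succ_of_le (Finset.le_sup (Finset.mem_univ v))
  exact ⟨φ, fun e x y hexy => hprop e x y hexy (hall x) (hall y),
    fun v => hmem v (hall v)⟩

end SignedGraph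

namespace SignedGraph

variable {G : SignedGraph}

lemma exists_closer {V : Type} (Gr : SimpleGraph V) (hc : Gr.Connected) (t v : V)
    (hv : v ≠ t) : ∃ u, Gr.Adj v u ∧ Gr.dist u t < Gr.dist v t := by
  obtain ⟨p, hp⟩ := (hc v t).exists_walk_length_eq_dist
  cases p with
  | nil => exact absurd rfl hv
  | @cons _ u _ h q =>
      refine ⟨u, h, ?_⟩
      have h1 : Gr.dist u t ≤ q.length := SimpleGraph.dist_le q
      have h2 : q.length + 1 = Gr.dist v t := by
        simpa [SimpleGraph.Walk.length_cons] using hp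
      omega

lemma idx_arith {c a b x y : ℕ} (ha : a < c) (hxy : x < y) :
    x * c + a < y * c + b := by
  have h1 : x * c + a < (x + 1) * c := by
    rw [add_mul, one_mul]; omega
  have h2 : (x + 1) * c ≤ y * c := Nat.mul_le_mul_right c hxy
  omega

lemma idx_inj {c : ℕ} {V : Type} {enum : V → ℕ} (henum : ∀ v, enum v < c)
    (hinj : Function.Injective enum) (d : V → ℕ) :
    Function.Injective (fun v => d v * c + enum v) := by
  intro a b hab
  simp only at hab
  rcases lt_trichotomy (d a) (d b) with hlt | heq | hgt
  · exact absurd hab (Nat.ne_of_lt (idx_arith (henum a) hlt))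
  · apply hinj
    have := henum a; have := henum b
    nlinarith [hab, heq]
  · exact absurd hab.symm (Nat.ne_of_lt (idx_arith (henum b) hgt))

/-- Adjacency in the vertex-deleted subgraph, in terms of the edges of `G`. -/
lemma delete_adj (v₀ : G.V) (x y : ((G.topSubgraph.delete v₀).toSG).V) :
    ((G.topSubgraph.delete v₀).toSG).adjGraph.Adj x y ↔
      ∃ e : G.E, v₀ ∉ G.ends e ∧ G.ends e = s(x.1, y.1) := by
  have hmap : ∀ e : ((G.topSubgraph.delete v₀).toSG).E,
      Sym2.map Subtype.val (((G.topSubgraph.delete v₀).toSG).ends e) = G.ends e.1 := by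
    intro e
    show Sym2.map Subtype.val s(_, _) = _
    rw [Sym2.map_pair_eq]
    show s((G.ends e.1).out.1, (G.ends e.1).out.2) = G.ends e.1
    have := Quot.out_eq (G.ends e.1)
    exact Quot.out_eq _
  constructor
  · rintro (⟨e, he⟩ : ((G.topSubgraph.delete v₀).toSG).Adj x y)
    refine ⟨e.1, ?_, ?_⟩
    · exact e.2.2
    · have := hmap e
      rw [he] at this
      exact this.symm
  · rintro ⟨e, hnv, hend⟩
    have hmem : e ∈ (G.topSubgraph.delete v₀).edges := ⟨trivial, hnv⟩
    show ((G.topSubgraph.delete v₀).toSG).Adj x y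
    refine ⟨⟨e, hmem⟩, ?_⟩
    apply Sym2.map.injective Subtype.val_injective
    exact (hmap ⟨e, hmem⟩).trans hend

lemma mem_delete_verts (v₀ : G.V) {u : G.V} (hu : u ≠ v₀) :
    u ∈ (G.topSubgraph.delete v₀).verts :=
  ⟨Set.mem_univ u, by simpa using hu⟩

/-- If `v₀` is not a cut vertex and `G` has another vertex, the deleted graph is
connected. -/
lemma delete_connected (v₀ : G.V) (hnc : ¬ G.IsCutVertex v₀) {w : G.V} (hw : w ≠ v₀) :
    ((G.topSubgraph.delete v₀).toSG).Connected := by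
  by_contra hcon
  exact hnc ⟨Set.mem_univ v₀, ⟨w, mem_delete_verts v₀ hw⟩, hcon⟩

end SignedGraph

namespace SignedGraph

variable {G : SignedGraph}

lemma edge_incl (L : G.V → Finset ℤ) (h : G.UncolorablePair L)
    (hblock : ∀ v : G.V, ¬ G.IsCutVertex v) :
    ∀ (e : G.E) (v w : G.V), G.ends e = s(v, w) → ∀ c ∈ L v, G.sign e * c ∈ L w := by
  intro e₀ v w he c hcL
  by_contra hc
  have hvw : v ≠ w := by
    intro hh; subst hh
    exact G.loopless e₀ (he ▸ Sym2.mk_isDiag_iff.mpr rfl)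
  set H := (G.topSubgraph.delete v).toSG with hH
  have hconn : H.adjGraph.Connected := delete_connected v (hblock v) (Ne.symm hvw)
  set tgt : H.V := ⟨w, mem_delete_verts v (Ne.symm hvw)⟩ with htgt
  set cV := Fintype.card G.V with hcV
  set enum : G.V → ℕ := fun u => ((Fintype.equivFin G.V) u : ℕ) with henumdef
  have henum : ∀ u, enum u < cV := fun u => ((Fintype.equivFin G.V) u).2
  have henuminj : Function.Injective enum := fun a b hab =>
    (Fintype.equivFin G.V).injective (Fin.ext hab)
  set lift : G.V → H.V := fun u =>
    if hu : u = v then tgt else ⟨u, mem_delete_verts v hu⟩ with hlift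
  set D := Finset.univ.sup (fun x : H.V => H.adjGraph.dist x tgt) with hD
  set dd : G.V → ℕ := fun u => D - H.adjGraph.dist (lift u) tgt with hdd
  set idx : G.V → ℕ := fun u =>
    if u = v then 0 else 1 + (dd u * cV + enum u) with hidx
  have hinj : Function.Injective idx := by
    intro a b hab
    simp only [hidx] at hab
    by_cases ha : a = v <;> by_cases hb : b = v
    · rw [ha, hb]
    · rw [if_pos ha, if_neg hb] at hab; omega
    · rw [if_neg ha, if_pos hb] at hab; omega
    · rw [if_neg ha, if_neg hb] at hab
      exact idx_inj henum henuminj dd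
        (show dd a * cV + enum a = dd b * cV + enum b by omega)
  set A : G.V → Finset ℤ := fun u =>
    if u = v then {c} else if u = w then insert (G.sign e₀ * c) (L w) else L u with hA
  have hlt : ∀ u, (Finset.univ.filter
      (fun e : G.E => ∃ z, G.ends e = s(u, z) ∧ idx z < idx u)).card < (A u).card := by
    intro u
    by_cases hu : u = v
    · have hfe : (Finset.univ.filter
          (fun e : G.E => ∃ z, G.ends e = s(u, z) ∧ idx z < idx u)) = ∅ := by
        apply Finset.filter_eq_empty_iff.mpr
        intro e _
        rintro ⟨z, _, hz⟩
        rw [hidx] at hz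
        simp only [if_pos hu] at hz
        omega
      rw [hfe, hA]
      simp [hu]
    · have hsub : (Finset.univ.filter
          (fun e : G.E => ∃ z, G.ends e = s(u, z) ∧ idx z < idx u)) ⊆
          (Finset.univ.filter (fun e : G.E => u ∈ G.ends e)) := by
        intro f hf
        rw [Finset.mem_filter] at hf ⊢
        obtain ⟨_, z, hz, _⟩ := hf
        exact ⟨Finset.mem_univ f, hz ▸ Sym2.mem_mk_left u z⟩
      have hdeg : (Finset.univ.filter (fun e : G.E => u ∈ G.ends e)).card = G.degree u :=
        rfl
      by_cases hw : u = w
      · have h1 : (Finset.univ.filter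
            (fun e : G.E => ∃ z, G.ends e = s(u, z) ∧ idx z < idx u)).card ≤
            G.degree u := hdeg ▸ Finset.card_le_card hsub
        have h2 : G.degree u ≤ (L u).card := h.2.1 u
        have h3 : (A u).card = (L w).card + 1 := by
          have : A u = insert (G.sign e₀ * c) (L w) := by rw [hA]; simp [hu, hw, hvw.symm]
          rw [this]
          exact Finset.card_insert_of_notMem hc
        have h4 : G.degree u = G.degree w := by rw [hw]
        have h5 : (L u).card = (L w).card := by rw [hw]
        omega
      · -- u ∉ {v, w}: find an edge towards tgt
        have hx : lift u = ⟨u, mem_delete_verts v hu⟩ := dif_neg hu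
        have hxt : lift u ≠ tgt := by
          rw [hx]
          intro hEq
          exact hw (congrArg Subtype.val hEq)
        obtain ⟨y, hadj, hdlt⟩ := exists_closer H.adjGraph hconn tgt (lift u) hxt
        obtain ⟨f, hnvf, hendf⟩ := (delete_adj v (lift u) y).mp hadj
        rw [hx] at hendf hdlt
        set z := y.1 with hzdef
        have hz : z ≠ v := by
          intro hh
          exact hnvf (hh ▸ (hendf ▸ Sym2.mem_mk_right u z))
        have hliftz : lift z = y := by
          rw [hlift]
          simp only [dif_neg hz]
          apply Subtype.ext
          exact congrArg Subtype.val (dif_neg hz)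
        have hdub : H.adjGraph.dist (lift u) tgt ≤ D := by
          rw [hD]
          exact Finset.le_sup (f := fun x : H.V => H.adjGraph.dist x tgt)
            (Finset.mem_univ (lift u))
        have hddlt : dd u < dd z := by
          have e3 : H.adjGraph.dist ⟨u, mem_delete_verts v hu⟩ tgt ≤ D := by
            rw [← hx]; exact hdub
          have e4 : H.adjGraph.dist y tgt < D := lt_of_lt_of_le hdlt e3
          calc dd u = D - H.adjGraph.dist ⟨u, mem_delete_verts v hu⟩ tgt := by
                simp only [hdd, hx]
            _ < D - H.adjGraph.dist y tgt := Nat.sub_lt_sub_left e4 hdlt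
            _ = dd z := by simp only [hdd, hliftz]
        have hgt : idx u < idx z := by
          rw [hidx]
          simp only [if_neg hu, if_neg hz]
          have := idx_arith (c := cV) (b := enum z) (henum u) hddlt
          omega
        have hfdeg : f ∈ Finset.univ.filter (fun e : G.E => u ∈ G.ends e) :=
          Finset.mem_filter.mpr ⟨Finset.mem_univ f, hendf ▸ Sym2.mem_mk_left u z⟩
        have hfnot : f ∉ Finset.univ.filter
            (fun e : G.E => ∃ z', G.ends e = s(u, z') ∧ idx z' < idx u) := by
          rw [Finset.mem_filter]
          rintro ⟨-, z', hz', hlt'⟩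
          rw [other_unique (G := G) f hendf hz'] at hlt'
          omega
        have hss : (Finset.univ.filter
            (fun e : G.E => ∃ z, G.ends e = s(u, z) ∧ idx z < idx u)) ⊂
            (Finset.univ.filter (fun e : G.E => u ∈ G.ends e)) :=
          (Finset.ssubset_iff_of_subset hsub).mpr ⟨f, hfdeg, hfnot⟩
        have h1 := Finset.card_lt_card hss
        have h2 : G.degree u ≤ (L u).card := h.2.1 u
        have h3 : A u = L u := by rw [hA]; simp [hu, hw]
        rw [h3]
        omega
  obtain ⟨φ, hcol, hmemA⟩ := greedy_s7 A idx hinj hlt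
  apply h.2.2
  refine ⟨φ, hcol, ?_⟩
  intro u
  have hA' := hmemA u
  have hAv : A v = {c} := by rw [hA]; simp
  by_cases hu : u = v
  · subst hu
    rw [hAv, Finset.mem_singleton] at hA'
    rw [hA']
    exact hcL
  · by_cases hw : u = w
    · have hAw : A u = insert (G.sign e₀ * c) (L w) := by rw [hA]; simp [hu, hw, hvw.symm]
      rw [hAw] at hA'
      have hφv : φ v = c := by
        have h5 := hmemA v
        rw [hAv, Finset.mem_singleton] at h5
        exact h5
      have hne : φ u ≠ G.sign e₀ * c := by
        subst hw
        have h6 := hcol e₀ u v (he.trans Sym2.eq_swap)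
        rw [hφv] at h6
        exact h6
      rcases Finset.mem_insert.mp hA' with hh | hh
      · exact absurd hh hne
      · have hLuw : L u = L w := by rw [hw]
        rw [hLuw]
        exact hh
    · have hAu : A u = L u := by rw [hA]; simp [hu, hw]
      rw [hAu] at hA'
      exact hA'

end SignedGraph

namespace SignedGraph

variable {G : SignedGraph}

lemma neg_image_neg_image (S : Finset ℤ) :
    (S.image (fun x => -x)).image (fun x => -x) = S := by
  rw [Finset.image_image]
  simp

lemma edge_eq (L : G.V → Finset ℤ) (h : G.UncolorablePair L)
    (hblock : ∀ v : G.V, ¬ G.IsCutVertex v) :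
    ∀ (e : G.E) (v w : G.V), G.ends e = s(v, w) →
      L v = (L w).image (fun x => G.sign e * x) := by
  intro e v w he
  have h1 := edge_incl L h hblock e v w he
  have h2 := edge_incl L h hblock e w v (he.trans Sym2.eq_swap)
  apply Finset.ext
  intro x
  simp only [Finset.mem_image]
  constructor
  · intro hx
    exact ⟨G.sign e * x, h1 x hx, sign_mul_sign e x⟩
  · rintro ⟨y, hy, rfl⟩
    exact h2 y hy

lemma edge_cases (L : G.V → Finset ℤ) (h : G.UncolorablePair L)
    (hblock : ∀ v : G.V, ¬ G.IsCutVertex v) {e : G.E} {a b : G.V}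
    (he : G.ends e = s(a, b)) :
    (G.sign e = 1 ∧ L a = L b) ∨
    (G.sign e = -1 ∧ L a = (L b).image (fun x => -x) ∧
      L b = (L a).image (fun x => -x)) := by
  have hE := edge_eq L h hblock e a b he
  rcases G.sign_unit e with h1 | h1
  · left
    refine ⟨h1, ?_⟩
    rw [h1] at hE
    simpa using hE
  · right
    have hE' : L a = (L b).image (fun x => -x) := by
      rw [h1] at hE
      simpa using hE
    exact ⟨h1, hE', by rw [hE', neg_image_neg_image]⟩

lemma deg_eq_card (L : G.V → Finset ℤ) (h : G.UncolorablePair L) :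
    ∀ t : G.V, G.degree t = (L t).card := by
  intro t
  refine le_antisymm (h.2.1 t) ?_
  by_contra hgt'
  push_neg at hgt'
  set cV := Fintype.card G.V with hcV
  set enum : G.V → ℕ := fun u => ((Fintype.equivFin G.V) u : ℕ) with henumdef
  have henum : ∀ u, enum u < cV := fun u => ((Fintype.equivFin G.V) u).2
  have henuminj : Function.Injective enum := fun a b hab =>
    (Fintype.equivFin G.V).injective (Fin.ext hab)
  set D := Finset.univ.sup (fun x : G.V => G.adjGraph.dist x t) with hD
  set dd : G.V → ℕ := fun u => D - G.adjGraph.dist u t with hdd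
  set idx : G.V → ℕ := fun u => dd u * cV + enum u with hidx
  have hinj : Function.Injective idx := idx_inj henum henuminj dd
  have hlt : ∀ u, (Finset.univ.filter
      (fun e : G.E => ∃ z, G.ends e = s(u, z) ∧ idx z < idx u)).card < (L u).card := by
    intro u
    have hsub : (Finset.univ.filter
        (fun e : G.E => ∃ z, G.ends e = s(u, z) ∧ idx z < idx u)) ⊆
        (Finset.univ.filter (fun e : G.E => u ∈ G.ends e)) := by
      intro f hf
      rw [Finset.mem_filter] at hf ⊢
      obtain ⟨_, z, hz, _⟩ := hf
      exact ⟨Finset.mem_univ f, hz ▸ Sym2.mem_mk_left u z⟩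
    have hdeg : (Finset.univ.filter (fun e : G.E => u ∈ G.ends e)).card = G.degree u :=
      rfl
    by_cases hu : u = t
    · subst hu
      have h1 : (Finset.univ.filter
          (fun e : G.E => ∃ z, G.ends e = s(u, z) ∧ idx z < idx u)).card ≤
          G.degree u := hdeg ▸ Finset.card_le_card hsub
      omega
    · obtain ⟨y, hadj, hdlt⟩ := exists_closer G.adjGraph h.1 t u hu
      obtain ⟨f, hendf⟩ := (hadj : G.Adj u y)
      have hdub : G.adjGraph.dist u t ≤ D := by
        rw [hD]
        exact Finset.le_sup (f := fun x : G.V => G.adjGraph.dist x t)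
          (Finset.mem_univ u)
      have hddlt : dd u < dd y := by
        have e4 : G.adjGraph.dist y t < D := lt_of_lt_of_le hdlt hdub
        calc dd u = D - G.adjGraph.dist u t := by simp only [hdd]
          _ < D - G.adjGraph.dist y t := Nat.sub_lt_sub_left e4 hdlt
          _ = dd y := by simp only [hdd]
      have hgt : idx u < idx y := by
        simp only [hidx]
        exact idx_arith (henum u) hddlt
      have hfdeg : f ∈ Finset.univ.filter (fun e : G.E => u ∈ G.ends e) :=
        Finset.mem_filter.mpr ⟨Finset.mem_univ f, hendf ▸ Sym2.mem_mk_left u y⟩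
      have hfnot : f ∉ Finset.univ.filter
          (fun e : G.E => ∃ z', G.ends e = s(u, z') ∧ idx z' < idx u) := by
        rw [Finset.mem_filter]
        rintro ⟨-, z', hz', hlt'⟩
        rw [other_unique (G := G) f hendf hz'] at hlt'
        omega
      have hss := (Finset.ssubset_iff_of_subset hsub).mpr ⟨f, hfdeg, hfnot⟩
      have h1 := Finset.card_lt_card hss
      have h2 : G.degree u ≤ (L u).card := h.2.1 u
      omega
  obtain ⟨φ, hcol, hmem⟩ := greedy_s7 L idx hinj hlt
  exact h.2.2 ⟨φ, hcol, hmem⟩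

end SignedGraph

/-- Lists in an uncolorable pair whose graph is a block. -/
theorem uncolorablePair_block_lists (G : SignedGraph) (L : G.V → Finset ℤ)
    (h : G.UncolorablePair L) (hblock : ∀ v : G.V, ¬ G.IsCutVertex v) :
    (∀ (e : G.E) (v w : G.V), G.ends e = s(v, w) →
        L v = (L w).image (fun x => G.sign e * x)) ∧
    ((∀ e : G.E, G.sign e = 1) → ∃ C : Finset ℤ, ∀ v : G.V, L v = C) ∧
    ((∃ e : G.E, G.sign e = -1) →
      (∃ C : Finset ℤ, C.image (fun x => -x) = C ∧ ∀ v : G.V, L v = C) ∨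
      (∃ X Y : Set G.V, G.BalancedWithParts X Y ∧ ∃ C : Finset ℤ,
        (∀ v ∈ X, L v = C) ∧ ∀ v ∈ Y, L v = C.image (fun x => -x))) ∧
    (∃ r : ℕ, ∀ v : G.V, G.degree v = r) := by
  have hedge := SignedGraph.edge_eq L h hblock
  have hdeg := SignedGraph.deg_eq_card L h
  obtain ⟨v₀⟩ : Nonempty G.V := h.1.nonempty
  set C := L v₀ with hC
  have hPN : ∀ v : G.V, L v = C ∨ L v = C.image (fun x => -x) := by
    intro v
    obtain ⟨p⟩ := h.1.preconnected v₀ v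
    have key : ∀ {a b : G.V}, G.adjGraph.Walk a b →
        (L a = C ∨ L a = C.image (fun x => -x)) →
        (L b = C ∨ L b = C.image (fun x => -x)) := by
      intro a b p
      induction p with
      | nil => exact id
      | @cons a c b hadj q ih =>
          intro hcl
          apply ih
          obtain ⟨e, he⟩ := (hadj : G.Adj a c)
          rcases SignedGraph.edge_cases L h hblock he with ⟨h1, heq⟩ | ⟨h1, hab, hba⟩
          · rw [← heq]
            exact hcl
          · rcases hcl with hcl | hcl
            · exact Or.inr (by rw [hba, hcl])
            · exact Or.inl (by rw [hba, hcl, SignedGraph.neg_image_neg_image])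
    exact key p (Or.inl hC.symm)
  refine ⟨hedge, ?_, ?_, ?_⟩
  · -- all edges positive
    intro hpos
    refine ⟨C, fun v => ?_⟩
    obtain ⟨p⟩ := h.1.preconnected v₀ v
    have key : ∀ {a b : G.V}, G.adjGraph.Walk a b → L a = L b := by
      intro a b p
      induction p with
      | nil => rfl
      | @cons a c b hadj q ih =>
          obtain ⟨e, he⟩ := (hadj : G.Adj a c)
          rcases SignedGraph.edge_cases L h hblock he with ⟨-, heq⟩ | ⟨h1, -, -⟩
          · exact heq.trans ih
          · rw [hpos e] at h1
            norm_num at h1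
    rw [hC]
    exact (key p).symm
  · -- a negative edge exists
    intro _
    by_cases hs : C.image (fun x => -x) = C
    · left
      refine ⟨C, hs, fun v => ?_⟩
      rcases hPN v with hv | hv
      · exact hv
      · rw [hv, hs]
    · right
      refine ⟨{v | L v = C}, {v | L v = C.image (fun x => -x)}, ⟨?_, ?_, ?_⟩, C,
        fun v hv => hv, fun v hv => hv⟩
      · apply Set.eq_univ_of_forall
        intro v
        rcases hPN v with hv | hv
        · exact Set.mem_union_left _ hv
        · exact Set.mem_union_right _ hv
      · rw [Set.disjoint_left]
        intro v hvX hvY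
        simp only [Set.mem_setOf_eq] at hvX hvY
        exact hs (hvY.symm.trans hvX)
      · intro e a b he
        rcases SignedGraph.edge_cases L h hblock he with ⟨h1, heq⟩ | ⟨h1, hab, hba⟩
        · constructor
          · intro hneg
            rw [h1] at hneg
            norm_num at hneg
          · rintro (⟨haX, hbY⟩ | ⟨haY, hbX⟩)
            · simp only [Set.mem_setOf_eq] at haX hbY
              exact absurd (hbY.symm.trans (heq.symm.trans haX)) hs
            · simp only [Set.mem_setOf_eq] at haY hbX
              exact absurd (haY.symm.trans (heq.trans hbX)) hs
        · refine ⟨fun _ => ?_, fun _ => h1⟩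
          rcases hPN b with hb | hb
          · have haY : L a = C.image (fun x => -x) := by rw [hab, hb]
            exact Or.inr ⟨haY, hb⟩
          · have haX : L a = C := by
              rw [hab, hb, SignedGraph.neg_image_neg_image]
            exact Or.inl ⟨haX, hb⟩
  · -- regularity
    refine ⟨C.card, fun v => ?_⟩
    rw [hdeg v]
    rcases hPN v with hv | hv
    · rw [hv]
    · rw [hv, Finset.card_image_of_injective _ neg_injective]
end

section
/- Let (G₁,L₁) and (G₂,L₂) be uncolorable pairs such that G₁ and G₂ have exactly one vertex v in common and no edges in common, let G = G₁ ∪ G₂, and let L be the list-assignment of G with L(u) = L_i(u) for u ∈ V(G_i) \ {v} (i = 1,2) and L(v) = L₁(v) ∪ L₂(v). If L₁(v) ∩ L₂(v) = ∅, then (G,L) is an uncolorable pair. -/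
open scoped Classical

namespace SignedGraphAux

open SignedGraph

lemma ends_val {G : SignedGraph} (H : G.Subgraph) (e : H.edges) (a b : H.verts)
    (h : H.toSG.ends e = s(a, b)) : G.ends e.1 = s(a.1, b.1) := by
  have h2 := congrArg (Sym2.map Subtype.val) h
  simp only [Subgraph.toSG, Sym2.map_pair_eq] at h2
  rw [← h2, Sym2.mk, Prod.mk.eta, Quot.out_eq]

lemma mem_ends_val {G : SignedGraph} (H : G.Subgraph) (e : H.edges) (u : H.verts) :
    u ∈ H.toSG.ends e ↔ u.1 ∈ G.ends e.1 := by
  simp only [Subgraph.toSG, Sym2.mem_iff]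
  constructor
  · intro h
    rcases Sym2.mem_iff.mp h with h | h
    · rw [h]; exact Sym2.out_fst_mem _
    · rw [h]; exact Sym2.out_snd_mem _
  · intro h
    rw [← (G.ends e.1).out_eq] at h
    rcases Sym2.mem_iff.mp h with h | h
    · exact Sym2.mem_iff.mpr (Or.inl (Subtype.ext h))
    · exact Sym2.mem_iff.mpr (Or.inr (Subtype.ext h))

lemma toSG_degree {G : SignedGraph} (H : G.Subgraph) (u : H.verts) :
    H.toSG.degree u =
      (Finset.univ.filter (fun e : G.E => e ∈ H.edges ∧ u.1 ∈ G.ends e)).card := by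
  unfold SignedGraph.degree
  apply Finset.card_bij (fun e _ => e.1)
  · intro e he
    simp only [Finset.mem_filter, Finset.mem_univ, true_and] at he ⊢
    exact ⟨e.2, (mem_ends_val H e u).mp he⟩
  · intro e₁ _ e₂ _ h; exact Subtype.ext h
  · intro e he
    simp only [Finset.mem_filter, Finset.mem_univ, true_and] at he
    exact ⟨⟨e, he.1⟩, (@Finset.mem_filter _ (fun a : H.toSG.E => u ∈ H.toSG.ends a) (fun a => Sym2.Mem.decidable u (H.toSG.ends a)) Finset.univ _).mpr ⟨Finset.mem_univ _, (mem_ends_val H ⟨e, he.1⟩ u).mpr he.2⟩,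
      rfl⟩


/-- The inclusion of a subgraph's adjacency graph into the ambient one. -/
def homSub {G : SignedGraph} (H : G.Subgraph) :
    H.toSG.adjGraph →g G.adjGraph where
  toFun := Subtype.val
  map_rel' := by intro a b hab; obtain ⟨e, he⟩ := (hab : H.toSG.Adj a b); exact ⟨e.1, ends_val H e a b he⟩

end SignedGraphAux

/-- Merging two uncolorable pairs at a common vertex with
disjoint lists yields an uncolorable pair. -/
theorem uncolorablePair_union (G : SignedGraph) (G₁ G₂ : G.Subgraph) (v : G.V)
    (hV : G₁.verts ∩ G₂.verts = {v}) (hVu : G₁.verts ∪ G₂.verts = Set.univ)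
    (hE : G₁.edges ∩ G₂.edges = ∅) (hEu : G₁.edges ∪ G₂.edges = Set.univ)
    (L₁ L₂ L : G.V → Finset ℤ)
    (h1 : G₁.toSG.UncolorablePair (fun u => L₁ u.1))
    (h2 : G₂.toSG.UncolorablePair (fun u => L₂ u.1))
    (hL1 : ∀ u ∈ G₁.verts, u ≠ v → L u = L₁ u)
    (hL2 : ∀ u ∈ G₂.verts, u ≠ v → L u = L₂ u)
    (hLv : L v = L₁ v ∪ L₂ v)
    (hdisj : L₁ v ∩ L₂ v = ∅) :
    G.UncolorablePair L := by
  classical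
  obtain ⟨hc1, hd1, hnc1⟩ := h1
  obtain ⟨hc2, hd2, hnc2⟩ := h2
  have hv12 : v ∈ G₁.verts ∩ G₂.verts := by rw [hV]; rfl
  have hv1 : v ∈ G₁.verts := hv12.1
  have hv2 : v ∈ G₂.verts := hv12.2
  -- degree computations
  have hdeg1 : ∀ u : G₁.verts, G₁.toSG.degree u =
      (Finset.univ.filter (fun e : G.E => e ∈ G₁.edges ∧ u.1 ∈ G.ends e)).card :=
    fun u => SignedGraphAux.toSG_degree G₁ u
  have hdeg2 : ∀ u : G₂.verts, G₂.toSG.degree u =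
      (Finset.univ.filter (fun e : G.E => e ∈ G₂.edges ∧ u.1 ∈ G.ends e)).card :=
    fun u => SignedGraphAux.toSG_degree G₂ u
  refine ⟨?_, ?_, ?_⟩
  · -- connectedness
    have hreach : ∀ u : G.V, G.adjGraph.Reachable u v := by
      intro u
      have hu : u ∈ G₁.verts ∪ G₂.verts := hVu ▸ Set.mem_univ u
      rcases hu with hu | hu
      · exact (hc1.preconnected ⟨u, hu⟩ ⟨v, hv1⟩).map (SignedGraphAux.homSub G₁)
      · exact (hc2.preconnected ⟨u, hu⟩ ⟨v, hv2⟩).map (SignedGraphAux.homSub G₂)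
    rw [SignedGraph.Connected, SimpleGraph.connected_iff]
    exact ⟨fun a b => (hreach a).trans (hreach b).symm, ⟨v⟩⟩
  · -- degree bound
    intro u
    by_cases hu : u = v
    · subst hu
      have hsplit : Finset.univ.filter (fun e : G.E => u ∈ G.ends e)
          = (Finset.univ.filter (fun e : G.E => e ∈ G₁.edges ∧ u ∈ G.ends e))
            ∪ (Finset.univ.filter (fun e : G.E => e ∈ G₂.edges ∧ u ∈ G.ends e)) := by
        ext e
        simp only [Finset.mem_filter, Finset.mem_union, Finset.mem_univ, true_and]
        constructor
        · intro h
          have he : e ∈ G₁.edges ∪ G₂.edges := hEu ▸ Set.mem_univ e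
          rcases he with h1 | h1
          · exact Or.inl ⟨h1, h⟩
          · exact Or.inr ⟨h1, h⟩
        · rintro (⟨_, h⟩ | ⟨_, h⟩) <;> exact h
      have hdis : Disjoint
          (Finset.univ.filter (fun e : G.E => e ∈ G₁.edges ∧ u ∈ G.ends e))
          (Finset.univ.filter (fun e : G.E => e ∈ G₂.edges ∧ u ∈ G.ends e)) := by
        rw [Finset.disjoint_left]
        intro e he hf
        simp only [Finset.mem_filter] at he hf
        have : e ∈ G₁.edges ∩ G₂.edges := ⟨he.2.1, hf.2.1⟩
        rw [hE] at this
        exact this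
      have hcard : (L u).card = (L₁ u).card + (L₂ u).card := by
        rw [hLv, Finset.card_union_of_disjoint
          (Finset.disjoint_iff_inter_eq_empty.mpr hdisj)]
      rw [SignedGraph.degree, hsplit, Finset.card_union_of_disjoint hdis, hcard]
      have b1 := hd1 ⟨u, hv1⟩
      have b2 := hd2 ⟨u, hv2⟩
      rw [hdeg1 ⟨u, hv1⟩] at b1
      rw [hdeg2 ⟨u, hv2⟩] at b2
      exact Nat.add_le_add b1 b2
    · have hu12 : u ∈ G₁.verts ∪ G₂.verts := hVu ▸ Set.mem_univ u
      have key : ∀ (A B : G.Subgraph), A.verts ∩ B.verts = {v} →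
          A.edges ∪ B.edges = Set.univ → u ∈ A.verts →
          (Finset.univ.filter (fun e : G.E => u ∈ G.ends e)) =
          (Finset.univ.filter (fun e : G.E => e ∈ A.edges ∧ u ∈ G.ends e)) := by
        intro A B hVAB hEAB huA
        ext e
        simp only [Finset.mem_filter, Finset.mem_univ, true_and]
        constructor
        · intro h
          refine ⟨?_, h⟩
          have he : e ∈ A.edges ∪ B.edges := hEAB ▸ Set.mem_univ e
          rcases he with h1 | h1
          · exact h1
          · exfalso
            have : u ∈ B.verts := B.ends_mem e h1 u h
            have : u ∈ A.verts ∩ B.verts := ⟨huA, this⟩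
            rw [hVAB] at this
            exact hu this
        · exact fun h => h.2
      rcases hu12 with hu1 | hu1
      · rw [SignedGraph.degree, key G₁ G₂ hV hEu hu1, hL1 u hu1 hu]
        have b1 := hd1 ⟨u, hu1⟩
        rwa [hdeg1 ⟨u, hu1⟩] at b1
      · rw [SignedGraph.degree,
          key G₂ G₁ (by rw [Set.inter_comm]; exact hV) (by rw [Set.union_comm]; exact hEu) hu1,
          hL2 u hu1 hu]
        have b2 := hd2 ⟨u, hu1⟩
        rwa [hdeg2 ⟨u, hu1⟩] at b2
  · -- uncolorability
    rintro ⟨φ, hcol, hmem⟩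
    have hφv := hmem v
    rw [hLv, Finset.mem_union] at hφv
    rcases hφv with hc | hc
    · refine hnc1 ⟨fun u => φ u.1, ?_, ?_⟩
      · intro e a b he
        exact hcol e.1 a.1 b.1 (SignedGraphAux.ends_val G₁ e a b he)
      · intro u
        show φ u.1 ∈ L₁ u.1
        by_cases h : u.1 = v
        · rw [h]; exact hc
        · rw [← hL1 u.1 u.2 h]; exact hmem u.1
    · refine hnc2 ⟨fun u => φ u.1, ?_, ?_⟩
      · intro e a b he
        exact hcol e.1 a.1 b.1 (SignedGraphAux.ends_val G₂ e a b he)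
      · intro u
        show φ u.1 ∈ L₂ u.1
        by_cases h : u.1 = v
        · rw [h]; exact hc
        · rw [← hL2 u.1 u.2 h]; exact hmem u.1
end
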